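/- Let {H_n} be a Positive Linear Recurrence Sequence with length L and size S. For n > 2L and 0 ≤ t < S, if ω ∈ Ω_{n−ℓ(t)}, then inserting the Type 2 block of size t immediately before the last block of ω yields a legal decomposition in Ω_n whose second-to-last block has size t. -/

import Mathlib

open scoped BigOperators
open Filter

/-- A Positive Linear Recurrence Sequence (PLRS): a sequence `H` of positive integers
satisfying `H (n+1) = c 1 * H n + ⋯ + c L * H (n+1-L)` for `n ≥ L`, with
`H 1 = 1` and initial conditions `H (n+1) = c 1 * H n + ⋯ + c n * H 1 + 1` for `1 ≤ n < L`. -/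
structure PLRS where
  /-- the length of the recurrence -/
  L : ℕ
  /-- the coefficients of the recurrence (indexed from 1) -/
  c : ℕ → ℕ
  /-- the sequence itself (indexed from 1) -/
  H : ℕ → ℕ
  L_pos : 0 < L
  c1_pos : 0 < c 1
  cL_pos : 0 < c L
  H_pos : ∀ n, 1 ≤ n → 0 < H n
  H_one : H 1 = 1
  H_rec : ∀ n, L ≤ n → H (n + 1) = ∑ i ∈ Finset.Icc 1 L, c i * H (n + 1 - i)
  H_init : ∀ n, 1 ≤ n → n < L → H (n + 1) = (∑ i ∈ Finset.Icc 1 n, c i * H (n + 1 - i)) + 1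

namespace PLRS

/-- The size `S = c 1 + ⋯ + c L` of a PLRS. -/
def size (P : PLRS) : ℕ := ∑ i ∈ Finset.Icc 1 P.L, P.c i

/-- Legality of a coefficient sequence `(a_1, …, a_m)` (as a list), not including the
requirement `a_1 > 0`: either (Condition 1) `m < L` and `a_i = c_i` for all `i`, or
(Condition 2) there is `s ∈ {1, …, L}` with `a_1 = c_1, …, a_{s-1} = c_{s-1}`, `a_s < c_s`,
and `(a_{s+1}, …, a_m)` legal (possibly empty). -/
inductive IsLegal (P : PLRS) : List ℕ → Prop
  | cond1 (m : ℕ) (h1 : 1 ≤ m) (h2 : m < P.L) :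
      IsLegal P ((List.range m).map fun i => P.c (i + 1))
  | cond2 (s : ℕ) (hs1 : 1 ≤ s) (hs2 : s ≤ P.L) (a : ℕ) (ha : a < P.c s)
      (rest : List ℕ) (hrest : IsLegal P rest) :
      IsLegal P (((List.range (s - 1)).map fun i => P.c (i + 1)) ++ a :: rest)
  | cond2_last (s : ℕ) (hs1 : 1 ≤ s) (hs2 : s ≤ P.L) (a : ℕ) (ha : a < P.c s) :
      IsLegal P (((List.range (s - 1)).map fun i => P.c (i + 1)) ++ [a])

/-- A legal decomposition: a legal coefficient sequence with `a_1 > 0`. -/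
def LegalDecomp (P : PLRS) (l : List ℕ) : Prop := P.IsLegal l ∧ 0 < l.headI

/-- The value `∑_{i=1}^m a_i H_{m+1-i}` of a coefficient sequence `(a_1, …, a_m)`. -/
def value (P : PLRS) (l : List ℕ) : ℕ :=
  ∑ i ∈ Finset.range l.length, l.getD i 0 * P.H (l.length - i)

/-- `Ω_n`: the set of legal decompositions of integers in `[H_n, H_{n+1})`. -/
def Omega (P : PLRS) (n : ℕ) : Set (List ℕ) :=
  {l | P.LegalDecomp l ∧ P.H n ≤ P.value l ∧ P.value l < P.H (n + 1)}

/-- Expectation of `g` under the uniform probability measure on a (finite) set `A`. -/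
noncomputable def expectOn (A : Set (List ℕ)) (g : List ℕ → ℝ) : ℝ :=
  (∑ᶠ l ∈ A, g l) / (A.ncard : ℝ)

/-- Variance of `g` under the uniform probability measure on a (finite) set `A`. -/
noncomputable def varOn (A : Set (List ℕ)) (g : List ℕ → ℝ) : ℝ :=
  expectOn A (fun l => g l ^ 2) - (expectOn A g) ^ 2

/-- Expectation of `g` under the uniform probability measure on `Ω_n`. -/
noncomputable def expect (P : PLRS) (n : ℕ) (g : List ℕ → ℝ) : ℝ := expectOn (P.Omega n) g

/-- Probability of the event `A` under the uniform probability measure on `Ω_n`. -/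
noncomputable def prob (P : PLRS) (n : ℕ) (A : Set (List ℕ)) : ℝ :=
  ((P.Omega n ∩ A).ncard : ℝ) / ((P.Omega n).ncard : ℝ)

/-- `E[K_n]`, the expected number of summands on `Ω_n`. -/
noncomputable def expectK (P : PLRS) (n : ℕ) : ℝ := P.expect n fun l => (l.sum : ℝ)

/-- `Var[K_n]`, the variance of the number of summands on `Ω_n`. -/
noncomputable def varK (P : PLRS) (n : ℕ) : ℝ := varOn (P.Omega n) fun l => (l.sum : ℝ)

/-- The first index (0-based) at which the coefficient list disagrees with `c`. -/
def firstMismatch (P : PLRS) (l : List ℕ) : Option ℕ :=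
  (List.range l.length).find? fun i => l.getD i 0 != P.c (i + 1)

/-- The block decomposition of a legal coefficient sequence: repeatedly split off the
Type 2 block `(c_1, …, c_{s-1}, a_s)` with `a_s ≠ c_s`; if the whole remaining sequence
agrees with `c` it is a single (Type 1) block. -/
def blocks (P : PLRS) (l : List ℕ) : List (List ℕ) :=
  if h : l = [] then []
  else
    match P.firstMismatch l with
    | none => [l]
    | some i => l.take (i + 1) :: P.blocks (l.drop (i + 1))
termination_by l.length
decreasing_by
  have hl : 0 < l.length := List.length_pos_iff.mpr h
  simp only [List.length_drop]
  omega

/-- The second-to-last block of a legal decomposition. -/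
def stlBlock (P : PLRS) (l : List ℕ) : List ℕ := ((P.blocks l).reverse).getD 1 []

/-- `Z_n(ω)`: the size (sum of coefficients) of the second-to-last block. -/
def Z (P : PLRS) (l : List ℕ) : ℕ := (P.stlBlock l).sum

/-- The length function `ℓ(t)`: the length of the Type 2 block of size `t`, i.e., the least
`s` with `t < c_1 + ⋯ + c_s`. -/
noncomputable def ell (P : PLRS) (t : ℕ) : ℕ :=
  sInf {s : ℕ | t < ∑ i ∈ Finset.Icc 1 s, P.c i}

/-- `L_n(ω) = ℓ(Z_n(ω))`: the length of the second-to-last block. -/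
noncomputable def Lfn (P : PLRS) (l : List ℕ) : ℕ := P.ell (P.Z l)

/-- `h_t`: remove the second-to-last block of a legal decomposition. -/
def removeSTL (P : PLRS) (l : List ℕ) : List ℕ :=
  ((((P.blocks l).reverse).eraseIdx 1).reverse).flatten

/-- The Type 2 block of size `t`: `(c_1, …, c_{ℓ(t)-1}, t - (c_1 + ⋯ + c_{ℓ(t)-1}))`. -/
noncomputable def type2Block (P : PLRS) (t : ℕ) : List ℕ :=
  ((List.range (P.ell t - 1)).map fun i => P.c (i + 1)) ++
    [t - ∑ i ∈ Finset.Icc 1 (P.ell t - 1), P.c i]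

/-- Insert the Type 2 block of size `t` immediately before the last block. -/
noncomputable def insertSTL (P : PLRS) (t : ℕ) (l : List ℕ) : List ℕ :=
  ((((P.blocks l).reverse).insertIdx 1 (P.type2Block t)).reverse).flatten

/-- A Type 1 block: `(c_1, …, c_m)` with `1 ≤ m < L`. -/
def IsType1Block (P : PLRS) (bl : List ℕ) : Prop :=
  ∃ m, 1 ≤ m ∧ m < P.L ∧ bl = (List.range m).map fun i => P.c (i + 1)

/-- A Type 2 block: `(c_1, …, c_{s-1}, a)` with `1 ≤ s ≤ L` and `a < c_s`. -/
def IsType2Block (P : PLRS) (bl : List ℕ) : Prop :=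
  ∃ s, 1 ≤ s ∧ s ≤ P.L ∧ ∃ a, a < P.c s ∧
    bl = ((List.range (s - 1)).map fun i => P.c (i + 1)) ++ [a]

/-- Conditional expectation of `g` on `Ω_n` given `Z_n = t`. -/
noncomputable def condExpect (P : PLRS) (n t : ℕ) (g : List ℕ → ℝ) : ℝ :=
  expectOn (P.Omega n ∩ {l | P.Z l = t}) g

end PLRS

open PLRS

namespace PLRS
section
variable (P : PLRS)

lemma sum_Icc_eq_range (f : ℕ → ℕ) (k : ℕ) :
    ∑ i ∈ Finset.Icc 1 k, f i = ∑ i ∈ Finset.range k, f (i+1) := by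
  rw [← Finset.Ico_add_one_right_eq_Icc, Finset.sum_Ico_eq_sum_range]
  simp [add_comm]

lemma H_le_succ (n : ℕ) (hn : 1 ≤ n) : P.H n ≤ P.H (n + 1) := by
  have key : P.H n ≤ P.c 1 * P.H (n + 1 - 1) := by
    simpa using Nat.le_mul_of_pos_left (P.H n) P.c1_pos
  rcases lt_or_ge n P.L with h | h
  · rw [P.H_init n hn h]
    have : P.c 1 * P.H (n+1-1) ≤ ∑ i ∈ Finset.Icc 1 n, P.c i * P.H (n+1-i) :=
      Finset.single_le_sum (f := fun i => P.c i * P.H (n+1-i)) (fun i _ => Nat.zero_le _)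
        (Finset.mem_Icc.mpr ⟨le_rfl, hn⟩)
    omega
  · rw [P.H_rec n h]
    exact le_trans key (Finset.single_le_sum (f := fun i => P.c i * P.H (n+1-i))
      (fun i _ => Nat.zero_le _) (Finset.mem_Icc.mpr ⟨le_rfl, P.L_pos⟩))

lemma H_mono : ∀ {m n : ℕ}, 1 ≤ m → m ≤ n → P.H m ≤ P.H n := by
  intro m n h1 h2
  induction n with
  | zero => omega
  | succ k ih =>
    rcases Nat.lt_or_ge m (k+1) with h | h
    · exact le_trans (ih (by omega)) (P.H_le_succ k (by omega))
    · have : m = k + 1 := by omega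
      simp [this]

lemma value_nil : P.value [] = 0 := by simp [value]

lemma value_cons (a : ℕ) (l : List ℕ) :
    P.value (a :: l) = a * P.H (l.length + 1) + P.value l := by
  simp only [value, List.length_cons]
  rw [Finset.sum_range_succ' (fun i => (a :: l).getD i 0 * P.H (l.length + 1 - i))]
  simp [add_comm]

lemma value_append (x y : List ℕ) :
    P.value (x ++ y) =
      (∑ i ∈ Finset.range x.length, x.getD i 0 * P.H (x.length + y.length - i)) + P.value y := by
  induction x with
  | nil => simp
  | cons a xs ih =>
    rw [List.cons_append, value_cons, ih]
    simp only [List.length_cons, List.length_append]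
    rw [Finset.sum_range_succ' (fun i => (a :: xs).getD i 0 * P.H (xs.length + 1 + y.length - i))]
    have h1 : xs.length + 1 + y.length - 0 = xs.length + y.length + 1 := by omega
    have h2 : ∀ i, xs.length + 1 + y.length - (i+1) = xs.length + y.length - i := by omega
    simp only [List.getD_cons_succ, List.getD_cons_zero, h1, h2]
    ring

lemma value_prefix (k : ℕ) (y : List ℕ) :
    P.value (((List.range k).map fun i => P.c (i + 1)) ++ y) =
      (∑ i ∈ Finset.Icc 1 k, P.c i * P.H (k + y.length + 1 - i)) + P.value y := by
  rw [value_append, sum_Icc_eq_range]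
  simp only [List.length_map, List.length_range]
  congr 1
  apply Finset.sum_congr rfl
  intro i hi
  simp only [Finset.mem_range] at hi
  rw [List.getD_eq_getElem?_getD, List.getElem?_map, List.getElem?_range hi]
  simp only [Option.map_some, Option.getD_some]
  congr 2
  omega


lemma legal_ne_nil {l : List ℕ} (h : P.IsLegal l) : l ≠ [] := by
  cases h with
  | cond1 m h1 h2 => simp; omega
  | cond2 s hs1 hs2 a ha rest hrest => simp
  | cond2_last s hs1 hs2 a ha => simp

lemma legal_length_pos {l : List ℕ} (h : P.IsLegal l) : 0 < l.length :=
  List.length_pos_iff.mpr (P.legal_ne_nil h)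

lemma sum_Icc_le_H {s m : ℕ} (hs : s ≤ P.L) (hsm : s ≤ m) (hm : 1 ≤ m) :
    ∑ i ∈ Finset.Icc 1 s, P.c i * P.H (m + 1 - i) ≤ P.H (m + 1) := by
  rcases le_or_gt P.L m with h | h
  · rw [P.H_rec m h]
    exact Finset.sum_le_sum_of_subset (Finset.Icc_subset_Icc_right hs)
  · rw [P.H_init m hm h]
    have := Finset.sum_le_sum_of_subset
      (f := fun i => P.c i * P.H (m + 1 - i)) (Finset.Icc_subset_Icc_right (a := 1) hsm)
    beta_reduce at this
    omega

lemma Icc_sum_split (f : ℕ → ℕ) {s : ℕ} (hs : 1 ≤ s) :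
    ∑ i ∈ Finset.Icc 1 s, f i = ∑ i ∈ Finset.Icc 1 (s-1), f i + f s := by
  obtain ⟨k, rfl⟩ : ∃ k, s = k + 1 := ⟨s-1, by omega⟩
  rw [Finset.sum_Icc_succ_top (by omega)]
  simp

lemma value_lt {l : List ℕ} (h : P.IsLegal l) : P.value l < P.H (l.length + 1) := by
  induction h with
  | cond1 m h1 h2 =>
    have : ((List.range m).map fun i => P.c (i + 1)) =
        ((List.range m).map fun i => P.c (i + 1)) ++ [] := by simp
    rw [this, value_prefix]
    simp only [List.length_append, List.length_map, List.length_range, List.length_nil,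
      value_nil, add_zero]
    rw [P.H_init m h1 h2]
    omega
  | cond2 s hs1 hs2 a ha rest hrest ih =>
    have hr : 0 < rest.length := P.legal_length_pos hrest
    rw [show (((List.range (s-1)).map fun i => P.c (i + 1)) ++ a :: rest)
        = (((List.range (s-1)).map fun i => P.c (i + 1)) ++ (a :: rest)) from rfl,
      value_prefix, value_cons]
    simp only [List.length_append, List.length_map, List.length_range, List.length_cons]
    set r := rest.length
    have key : ∑ i ∈ Finset.Icc 1 (s-1), P.c i * P.H (s - 1 + (r + 1) + 1 - i)
        + (a * P.H (r + 1) + P.value rest)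
        < ∑ i ∈ Finset.Icc 1 s, P.c i * P.H (s + r + 1 - i) := by
      have hsplit : ∑ i ∈ Finset.Icc 1 s, P.c i * P.H (s + r + 1 - i)
          = ∑ i ∈ Finset.Icc 1 (s-1), P.c i * P.H (s + r + 1 - i) + P.c s * P.H (r + 1) := by
        rw [Icc_sum_split (fun i => P.c i * P.H (s + r + 1 - i)) hs1]
        have : s + r + 1 - s = r + 1 := by omega
        rw [this]
      have heq : ∀ i ∈ Finset.Icc 1 (s-1), P.c i * P.H (s - 1 + (r + 1) + 1 - i)
          = P.c i * P.H (s + r + 1 - i) := by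
        intro i hi; congr 2; omega
      rw [Finset.sum_congr rfl heq, hsplit]
      have : a * P.H (r+1) + P.value rest < P.c s * P.H (r + 1) := by
        have h1 : a + 1 ≤ P.c s := ha
        have h2 : P.value rest < P.H (r + 1) := ih
        nlinarith
      omega
    have hle : ∑ i ∈ Finset.Icc 1 s, P.c i * P.H (s + r + 1 - i) ≤ P.H (s + r + 1) :=
      P.sum_Icc_le_H hs2 (by omega) (by omega)
    calc _ < ∑ i ∈ Finset.Icc 1 s, P.c i * P.H (s + r + 1 - i) := key
      _ ≤ P.H (s + r + 1) := hle
      _ = P.H (s - 1 + (r + 1) + 1) := by congr 1; omega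
  | cond2_last s hs1 hs2 a ha =>
    rw [show (((List.range (s-1)).map fun i => P.c (i + 1)) ++ [a])
        = (((List.range (s-1)).map fun i => P.c (i + 1)) ++ ([a] : List ℕ)) from rfl,
      value_prefix, value_cons, value_nil]
    simp only [List.length_append, List.length_map, List.length_range, List.length_cons,
      List.length_nil, P.H_one]
    have key : ∑ i ∈ Finset.Icc 1 (s-1), P.c i * P.H (s - 1 + 1 + 1 - i) + (a * 1 + 0)
        < ∑ i ∈ Finset.Icc 1 s, P.c i * P.H (s + 1 - i) := by
      have hsplit : ∑ i ∈ Finset.Icc 1 s, P.c i * P.H (s + 1 - i)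
          = ∑ i ∈ Finset.Icc 1 (s-1), P.c i * P.H (s + 1 - i) + P.c s * P.H 1 := by
        rw [Icc_sum_split (fun i => P.c i * P.H (s + 1 - i)) hs1]
        have : s + 1 - s = 1 := by omega
        rw [this]
      have heq : ∀ i ∈ Finset.Icc 1 (s-1), P.c i * P.H (s - 1 + 1 + 1 - i)
          = P.c i * P.H (s + 1 - i) := by
        intro i hi; congr 2; omega
      rw [Finset.sum_congr rfl heq, hsplit, P.H_one]
      omega
    have hle : ∑ i ∈ Finset.Icc 1 s, P.c i * P.H (s + 1 - i) ≤ P.H (s + 1) :=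
      P.sum_Icc_le_H hs2 le_rfl hs1
    calc _ < ∑ i ∈ Finset.Icc 1 s, P.c i * P.H (s + 1 - i) := key
      _ ≤ P.H (s + 1) := hle
      _ = P.H (s - 1 + 1 + 1) := by congr 1; omega

lemma value_ge {l : List ℕ} (hne : l ≠ []) (hh : 0 < l.headI) : P.H l.length ≤ P.value l := by
  cases l with
  | nil => simp at hne
  | cons a rest =>
    rw [value_cons]
    simp only [List.headI] at hh
    have : P.H (rest.length + 1) ≤ a * P.H (rest.length + 1) :=
      Nat.le_mul_of_pos_left _ hh
    simp only [List.length_cons]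
    omega


lemma find?_range_eq_some {p : ℕ → Bool} {n i : ℕ} (hi : i < n) (hp : p i = true)
    (hmin : ∀ j, j < i → p j = false) : (List.range n).find? p = some i := by
  have hn : n = i + (n - i) := by omega
  rw [hn, List.range_add, List.find?_append]
  have h1 : (List.range i).find? p = none := by
    rw [List.find?_eq_none]
    intro x hx
    simp only [List.mem_range] at hx
    simp [hmin x hx]
  rw [h1]
  obtain ⟨k, hk⟩ : ∃ k, n - i = k + 1 := ⟨n - i - 1, by omega⟩
  rw [hk, List.range_succ_eq_map, List.map_cons, List.find?_cons_of_pos (by simpa using hp)]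
  simp

lemma blocks_nil : P.blocks [] = [] := by rw [blocks]; simp

lemma getD_prefix {s j : ℕ} (a : ℕ) (r : List ℕ) (hj : j < s - 1) :
    ((((List.range (s-1)).map fun i => P.c (i+1)) ++ [a]) ++ r).getD j 0 = P.c (j + 1) := by
  rw [List.getD_eq_getElem?_getD, List.getElem?_append, if_pos (by simp; omega),
    List.getElem?_append, if_pos (by simpa using hj), List.getElem?_map,
    List.getElem?_range hj]
  simp

lemma firstMismatch_type2_append {s : ℕ} (a : ℕ) (r : List ℕ) (hs : 1 ≤ s)
    (ha : a ≠ P.c s) :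
    P.firstMismatch ((((List.range (s-1)).map fun i => P.c (i+1)) ++ [a]) ++ r)
      = some (s - 1) := by
  unfold firstMismatch
  apply find?_range_eq_some
  · simp
  · have : ((((List.range (s-1)).map fun i => P.c (i+1)) ++ [a]) ++ r).getD (s-1) 0 = a := by
      rw [List.getD_eq_getElem?_getD, List.getElem?_append, if_pos (by simp),
        List.getElem?_append, if_neg (by simp)]
      simp
    rw [this, show s - 1 + 1 = s by omega]
    simpa using ha
  · intro j hj
    rw [P.getD_prefix a r hj]
    simp

lemma blocks_cons_of_type2 {b : List ℕ} (r : List ℕ) (hb : P.IsType2Block b) :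
    P.blocks (b ++ r) = b :: P.blocks r := by
  obtain ⟨s, hs1, hs2, a, ha, rfl⟩ := hb
  have hfm := P.firstMismatch_type2_append a r hs1 (by omega)
  have hlen : (((List.range (s-1)).map fun i => P.c (i+1)) ++ [a]).length = s - 1 + 1 := by
    simp
  rw [blocks]
  simp only [dif_neg (show ((List.range (s-1)).map fun i => P.c (i+1)) ++ [a] ++ r ≠ [] by simp),
    hfm, List.take_left' hlen, List.drop_left' hlen]

lemma blocks_of_type1 {d : List ℕ} (hd : P.IsType1Block d) : P.blocks d = [d] := by
  obtain ⟨m, hm1, hm2, rfl⟩ := hd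
  rw [blocks]
  have hfm : P.firstMismatch ((List.range m).map fun i => P.c (i + 1)) = none := by
    unfold firstMismatch
    rw [List.find?_eq_none]
    intro x hx
    simp only [List.length_map, List.length_range, List.mem_range] at hx
    rw [List.getD_eq_getElem?_getD, List.getElem?_map, List.getElem?_range hx]
    simp
  rw [dif_neg (by simp; omega), hfm]

lemma blocks_of_type2 {d : List ℕ} (hd : P.IsType2Block d) : P.blocks d = [d] := by
  have := P.blocks_cons_of_type2 [] hd
  simpa [P.blocks_nil] using this

lemma type2_length_le {b : List ℕ} (hb : P.IsType2Block b) : 1 ≤ b.length ∧ b.length ≤ P.L := by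
  obtain ⟨s, hs1, hs2, a, ha, rfl⟩ := hb
  simp
  omega

lemma type1_length_le {d : List ℕ} (hd : P.IsType1Block d) : 1 ≤ d.length ∧ d.length ≤ P.L := by
  obtain ⟨m, hm1, hm2, rfl⟩ := hd
  simp
  omega

lemma blocks_structure {l : List ℕ} (h : P.IsLegal l) :
    ∃ bs d, (∀ b ∈ bs, P.IsType2Block b) ∧ (P.IsType1Block d ∨ P.IsType2Block d) ∧
      l = (bs ++ [d]).flatten := by
  induction h with
  | cond1 m h1 h2 =>
    exact ⟨[], _, by simp, Or.inl ⟨m, h1, h2, rfl⟩, by simp⟩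
  | cond2_last s hs1 hs2 a ha =>
    exact ⟨[], _, by simp, Or.inr ⟨s, hs1, hs2, a, ha, rfl⟩, by simp⟩
  | cond2 s hs1 hs2 a ha rest hrest ih =>
    obtain ⟨bs, d, hbs, hd, hfl⟩ := ih
    refine ⟨(((List.range (s-1)).map fun i => P.c (i+1)) ++ [a]) :: bs, d, ?_, hd, ?_⟩
    · intro b hb
      rcases List.mem_cons.mp hb with rfl | hb
      · exact ⟨s, hs1, hs2, a, ha, rfl⟩
      · exact hbs b hb
    · simp only [List.cons_append, List.flatten_cons, ← hfl, List.append_assoc,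
        List.singleton_append]
      simp

lemma blocks_flatten {bs : List (List ℕ)} {d : List ℕ} (hbs : ∀ b ∈ bs, P.IsType2Block b)
    (hd : P.IsType1Block d ∨ P.IsType2Block d) :
    P.blocks ((bs ++ [d]).flatten) = bs ++ [d] := by
  induction bs with
  | nil =>
    simp only [List.nil_append, List.flatten_cons, List.flatten_nil, List.append_nil]
    rcases hd with hd | hd
    · exact P.blocks_of_type1 hd
    · exact P.blocks_of_type2 hd
  | cons b bs ih =>
    simp only [List.cons_append, List.flatten_cons]
    rw [P.blocks_cons_of_type2 _ (hbs b (by simp)), ih (fun x hx => hbs x (by simp [hx]))]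

lemma legal_flatten {bs : List (List ℕ)} {d : List ℕ} (hbs : ∀ b ∈ bs, P.IsType2Block b)
    (hd : P.IsType1Block d ∨ P.IsType2Block d) :
    P.IsLegal ((bs ++ [d]).flatten) := by
  induction bs with
  | nil =>
    simp only [List.nil_append, List.flatten_cons, List.flatten_nil, List.append_nil]
    rcases hd with ⟨m, hm1, hm2, rfl⟩ | ⟨s, hs1, hs2, a, ha, rfl⟩
    · exact IsLegal.cond1 m hm1 hm2
    · exact IsLegal.cond2_last s hs1 hs2 a ha
  | cons b bs ih =>
    obtain ⟨s, hs1, hs2, a, ha, rfl⟩ := hbs b (by simp)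
    simp only [List.cons_append, List.flatten_cons, List.append_assoc, List.singleton_append]
    exact IsLegal.cond2 s hs1 hs2 a ha _ (ih (fun x hx => hbs x (by simp [hx])))

lemma list_sum_range (f : ℕ → ℕ) (n : ℕ) :
    ((List.range n).map f).sum = ∑ i ∈ Finset.range n, f i := by
  induction n with
  | zero => simp
  | succ k ih => rw [List.sum_range_succ, Finset.sum_range_succ, ih]

lemma ell_facts (t : ℕ) (ht : t < P.size) :
    1 ≤ P.ell t ∧ P.ell t ≤ P.L ∧ (∑ i ∈ Finset.Icc 1 (P.ell t - 1), P.c i) ≤ t ∧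
      t < (∑ i ∈ Finset.Icc 1 (P.ell t - 1), P.c i) + P.c (P.ell t) := by
  have hL : P.L ∈ {s : ℕ | t < ∑ i ∈ Finset.Icc 1 s, P.c i} := ht
  have hne : Set.Nonempty {s : ℕ | t < ∑ i ∈ Finset.Icc 1 s, P.c i} := ⟨P.L, hL⟩
  have hmem' : t < ∑ i ∈ Finset.Icc 1 (P.ell t), P.c i := Nat.sInf_mem hne
  have hle : P.ell t ≤ P.L := Nat.sInf_le hL
  have h1 : 1 ≤ P.ell t := by
    by_contra h
    rw [show P.ell t = 0 by omega] at hmem'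
    simp at hmem'
  have hpre : ¬ t < ∑ i ∈ Finset.Icc 1 (P.ell t - 1), P.c i := by
    have := Nat.notMem_of_lt_sInf (s := {s : ℕ | t < ∑ i ∈ Finset.Icc 1 s, P.c i})
      (m := P.ell t - 1) (show P.ell t - 1 < P.ell t by omega)
    simpa using this
  have hsplit : ∑ i ∈ Finset.Icc 1 (P.ell t), P.c i
      = ∑ i ∈ Finset.Icc 1 (P.ell t - 1), P.c i + P.c (P.ell t) :=
    Icc_sum_split P.c h1
  refine ⟨h1, hle, by omega, by omega⟩

lemma headI_append {x y : List ℕ} (hx : x ≠ []) : (x ++ y).headI = x.headI := by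
  cases x with
  | nil => simp at hx
  | cons a l => rfl

lemma length_pin {l : List ℕ} {m : ℕ} (hleg : P.IsLegal l) (hh : 0 < l.headI)
    (hm : 1 ≤ m) (hlo : P.H m ≤ P.value l) (hhi : P.value l < P.H (m + 1)) :
    l.length = m := by
  have hne := P.legal_ne_nil hleg
  have h1 : P.H l.length ≤ P.value l := P.value_ge hne hh
  have h2 : P.value l < P.H (l.length + 1) := P.value_lt hleg
  have hlp : 1 ≤ l.length := List.length_pos_iff.mpr hne
  by_contra hne'
  rcases Nat.lt_or_ge l.length m with h | h
  · have := P.H_mono (by omega : 1 ≤ l.length + 1) (by omega : l.length + 1 ≤ m)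
    omega
  · have hlt : m < l.length := by omega
    have := P.H_mono (by omega : 1 ≤ m + 1) (by omega : m + 1 ≤ l.length)
    omega

end
end PLRS


/-- For `n > 2L`, `0 ≤ t < S` and `ω ∈ Ω_{n-ℓ(t)}`, inserting the Type 2
block of size `t` immediately before the last block of `ω` yields a legal decomposition in
`Ω_n` whose second-to-last block has size `t`. -/
theorem insertSTL_mem (P : PLRS) (n t : ℕ) (hn : 2 * P.L < n) (ht : t < P.size)
    (l : List ℕ) (hl : l ∈ P.Omega (n - P.ell t)) :
    P.insertSTL t l ∈ P.Omega n ∧ P.Z (P.insertSTL t l) = t := by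
  obtain ⟨⟨hleg, hhead⟩, hlo, hhi⟩ := hl
  have hL1 : 1 ≤ P.L := P.L_pos
  obtain ⟨he1, heL, hpre, hlt⟩ := P.ell_facts t ht
  set T := P.type2Block t with hTdef
  have hT : P.IsType2Block T :=
    ⟨P.ell t, he1, heL, t - ∑ i ∈ Finset.Icc 1 (P.ell t - 1), P.c i, by omega, rfl⟩
  have hTlen : T.length = P.ell t := by
    simp only [hTdef, type2Block, List.length_append, List.length_map, List.length_range,
      List.length_cons, List.length_nil]
    omega
  have hTsum : T.sum = t := by
    simp only [hTdef, type2Block, List.sum_append, List.sum_cons, List.sum_nil,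
      list_sum_range]
    rw [← sum_Icc_eq_range P.c]
    omega
  obtain ⟨bs, d, hbs, hd, hflat⟩ := P.blocks_structure hleg
  have hblocks : P.blocks l = bs ++ [d] := by rw [hflat]; exact P.blocks_flatten hbs hd
  have hlen_l : l.length = n - P.ell t := P.length_pin hleg hhead (by omega) hlo hhi
  have hdlen : 1 ≤ d.length ∧ d.length ≤ P.L := by
    rcases hd with hd | hd
    · exact P.type1_length_le hd
    · exact P.type2_length_le hd
  have hbs_ne : bs ≠ [] := by
    rintro rfl
    have hld : l.length = d.length := by rw [hflat]; simp
    omega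
  have hins : P.insertSTL t l = ((bs ++ [T]) ++ [d]).flatten := by
    rw [insertSTL, hblocks, List.reverse_append, List.reverse_singleton,
      List.singleton_append, List.insertIdx_succ_cons]
    simp
    exact hTdef.symm
  have hbsT : ∀ b ∈ bs ++ [T], P.IsType2Block b := by
    intro b hb
    rcases List.mem_append.mp hb with h | h
    · exact hbs b h
    · simp only [List.mem_singleton] at h
      subst h
      exact hT
  have hlegal' : P.IsLegal (P.insertSTL t l) := by
    rw [hins]; exact P.legal_flatten hbsT hd
  have hlen' : (P.insertSTL t l).length = n := by
    have h1 : (P.insertSTL t l).length = bs.flatten.length + T.length + d.length := by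
      rw [hins]
      simp [List.flatten_append]
      omega
    have h2 : l.length = bs.flatten.length + d.length := by
      rw [hflat]
      simp [List.flatten_append]
    omega
  obtain ⟨b1, bs', rfl⟩ := List.exists_cons_of_ne_nil hbs_ne
  have hb1ne : b1 ≠ [] := by
    obtain ⟨s, _, _, a, _, rfl⟩ := hbs b1 (by simp)
    simp
  have hhead' : 0 < (P.insertSTL t l).headI := by
    rw [hins]
    simp only [List.cons_append, List.flatten_cons]
    rw [headI_append hb1ne]
    have : l.headI = b1.headI := by
      rw [hflat]
      simp only [List.cons_append, List.flatten_cons]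
      rw [headI_append hb1ne]
    omega
  have hge : P.H n ≤ P.value (P.insertSTL t l) := by
    have := P.value_ge (P.legal_ne_nil hlegal') hhead'
    rwa [hlen'] at this
  have hlt' : P.value (P.insertSTL t l) < P.H (n + 1) := by
    have := P.value_lt hlegal'
    rwa [hlen'] at this
  have hblocks' : P.blocks (P.insertSTL t l) = ((b1 :: bs') ++ [T]) ++ [d] := by
    rw [hins]; exact P.blocks_flatten hbsT hd
  have hZ : P.Z (P.insertSTL t l) = T.sum := by
    rw [Z, stlBlock, hblocks']
    simp [List.reverse_append]
  exact ⟨⟨⟨hlegal', hhead'⟩, hge, hlt'⟩, by rw [hZ, hTsum]⟩
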